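/- Suppose for the homogeneous system with solution operator S_t = e^{tA} the single-time observability estimate ‖S_T v‖ ≤ (C_{T,τ} ‖1_ω S_{T−τ} v‖)^β ‖v‖^{1−β} holds for all v in the Hilbert space H, with β ∈ (0,1) and C_{T,τ} > 0. Then for every ε > 0 and every initial datum Ψ⁰ with ‖Ψ⁰‖ = 1, there exists an impulse control h ∈ H supported in ω (i.e. h = 1_ω h) with ‖h‖ ≤ C_{T,τ} ε^{−(1−β)/β} such that the controlled state Ψ(T) = S_T Ψ⁰ + S_{T−τ} (1_ω h) satisfies ‖Ψ(T)‖ ≤ ε. -/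

import Mathlib

open RealInnerProductSpace

lemma exists_min_of_midpoint_convex {H : Type*} [NormedAddCommGroup H]
    [InnerProductSpace ℝ H] [CompleteSpace H]
    (f : H → ℝ) (hf : Continuous f) (α : ℝ) (hα : 0 < α)
    (hconv : ∀ u v : H, f ((2:ℝ)⁻¹ • (u + v)) ≤ f u / 2 + f v / 2 - α/8 * ‖u - v‖^2)
    (hbdd : BddBelow (Set.range f)) : ∃ m : H, ∀ v, f m ≤ f v := by
  set c := ⨅ v, f v with hc
  have hcle : ∀ v, c ≤ f v := fun v => ciInf_le hbdd v
  have hseq : ∀ n : ℕ, ∃ v : H, f v < c + 1/(n+1) := by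
    intro n
    have hpos : (0:ℝ) < 1/(n+1) := by positivity
    have : c < c + 1/(n+1) := by linarith
    obtain ⟨v, hv⟩ := exists_lt_of_ciInf_lt (by exact this : (⨅ v, f v) < c + 1/(n+1))
    exact ⟨v, hv⟩
  choose v hv using hseq
  have hdist : ∀ N n m : ℕ, N ≤ n → N ≤ m →
      dist (v n) (v m) ≤ Real.sqrt (16/(α*(N+1))) := by
    intro N n m hn hm
    have h1 : c ≤ f ((2:ℝ)⁻¹ • (v n + v m)) := hcle _
    have h2 := hconv (v n) (v m)
    have hn1 : 1/((n:ℝ)+1) ≤ 1/((N:ℝ)+1) := by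
      apply one_div_le_one_div_of_le (by positivity)
      exact_mod_cast Nat.succ_le_succ hn
    have hm1 : 1/((m:ℝ)+1) ≤ 1/((N:ℝ)+1) := by
      apply one_div_le_one_div_of_le (by positivity)
      exact_mod_cast Nat.succ_le_succ hm
    have hsq : ‖v n - v m‖^2 ≤ 16/(α*(N+1)) := by
      have hfn := hv n
      have hfm := hv m
      have key : α/8 * ‖v n - v m‖^2 ≤ 1/((N:ℝ)+1) := by linarith
      have hN1 : (0:ℝ) < (N:ℝ)+1 := by positivity
      have h8 : (1/((N:ℝ)+1))*((N:ℝ)+1) = 1 := by field_simp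
      have key3 : α/8 * ‖v n - v m‖^2 * ((N:ℝ)+1) ≤ 1 := by
        calc α/8 * ‖v n - v m‖^2 * ((N:ℝ)+1) ≤ (1/((N:ℝ)+1))*((N:ℝ)+1) :=
              mul_le_mul_of_nonneg_right key hN1.le
          _ = 1 := h8
      rw [le_div_iff₀ (by positivity)]
      nlinarith [norm_nonneg (v n - v m)]
    rw [dist_eq_norm]
    calc ‖v n - v m‖ = Real.sqrt (‖v n - v m‖^2) := by
          rw [Real.sqrt_sq (norm_nonneg _)]
      _ ≤ Real.sqrt (16/(α*(N+1))) := Real.sqrt_le_sqrt hsq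
  have hcauchy : CauchySeq v := by
    apply cauchySeq_of_le_tendsto_0 (fun N : ℕ => Real.sqrt (16/(α*((N:ℝ)+1))))
      (fun (n m N : ℕ) hn hm => hdist N n m hn hm)
    have h0 : Filter.Tendsto (fun N : ℕ => 16/(α*((N:ℝ)+1))) Filter.atTop (nhds 0) := by
      apply Filter.Tendsto.div_atTop tendsto_const_nhds
      apply Filter.Tendsto.const_mul_atTop hα
      exact Filter.tendsto_atTop_add_const_right _ _ tendsto_natCast_atTop_atTop
    have h1 := (Real.continuous_sqrt.tendsto 0).comp h0
    simp only [Function.comp_def, Real.sqrt_zero] at h1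
    exact h1
  obtain ⟨m, hm⟩ := cauchySeq_tendsto_of_complete hcauchy
  refine ⟨m, fun w => ?_⟩
  have hfm : Filter.Tendsto (fun n => f (v n)) Filter.atTop (nhds (f m)) :=
    (hf.tendsto m).comp hm
  have hfc : Filter.Tendsto (fun n => f (v n)) Filter.atTop (nhds c) := by
    have hup : Filter.Tendsto (fun n : ℕ => c + 1/((n:ℝ)+1)) Filter.atTop (nhds c) := by
      have : Filter.Tendsto (fun n : ℕ => 1/((n:ℝ)+1)) Filter.atTop (nhds 0) :=
        tendsto_one_div_add_atTop_nhds_zero_nat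
      simpa using tendsto_const_nhds.add this
    exact tendsto_of_tendsto_of_tendsto_of_le_of_le tendsto_const_nhds hup
      (fun n => hcle (v n)) (fun n => (hv n).le)
  have : f m = c := tendsto_nhds_unique hfm hfc
  rw [this]; exact hcle w

lemma young_impulse_aux {β ε : ℝ} (hβ0 : 0 < β) (hβ1 : β < 1) (hε : 0 < ε)
    {a b : ℝ} (ha : 0 ≤ a) (hb : 0 ≤ b) :
    a ^ β * b ^ (1-β) ≤ ε ^ (-(1-β)/β) * a + ((1-β) * β ^ (β/(1-β)) * ε) * b := by
  have h1β : (0:ℝ) < 1-β := by linarith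
  set μ := ε ^ (-(1-β)/β) / β with hμ
  set ν := β ^ (β/(1-β)) * ε with hν
  have hμpos : 0 < μ := by positivity
  have hνpos : 0 < ν := by positivity
  have hμν : μ ^ β * ν ^ (1-β) = 1 := by
    rw [hμ, hν, Real.div_rpow (Real.rpow_nonneg hε.le _) hβ0.le,
        Real.mul_rpow (Real.rpow_nonneg hβ0.le _) hε.le,
        ← Real.rpow_mul hε.le, ← Real.rpow_mul hβ0.le]
    have e1 : -(1-β)/β*β = -(1-β) := by field_simp
    have e2 : β/(1-β)*(1-β) = β := by field_simp
    rw [e1, e2, Real.rpow_neg hε.le]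
    have p1 : (0:ℝ) < ε^(1-β) := Real.rpow_pos_of_pos hε _
    have p2 : (0:ℝ) < β^β := Real.rpow_pos_of_pos hβ0 _
    field_simp
  have key : (μ*a) ^ β * (ν*b) ^ (1-β) ≤ β * (μ*a) + (1-β) * (ν*b) :=
    Real.geom_mean_le_arith_mean2_weighted hβ0.le h1β.le (by positivity) (by positivity)
      (by ring)
  have expand : (μ*a) ^ β * (ν*b) ^ (1-β) = a ^ β * b ^ (1-β) := by
    rw [Real.mul_rpow hμpos.le ha, Real.mul_rpow hνpos.le hb]
    calc μ^β*a^β*(ν^(1-β)*b^(1-β)) = (μ^β*ν^(1-β))*(a^β*b^(1-β)) := by ring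
      _ = a^β*b^(1-β) := by rw [hμν]; ring
  have hβμ : β * μ = ε ^ (-(1-β)/β) := by
    rw [hμ]; field_simp
  calc a ^ β * b ^ (1-β) = (μ*a) ^ β * (ν*b) ^ (1-β) := expand.symm
    _ ≤ β * (μ*a) + (1-β) * (ν*b) := key
    _ = (β*μ)*a + ((1-β)*ν)*b := by ring
    _ = ε ^ (-(1-β)/β) * a + ((1-β) * β ^ (β/(1-β)) * ε) * b := by rw [hβμ, hν]; ring

set_option maxHeartbeats 2000000 in
/-- Null approximate impulse controllability with cost bound from the
single-time observability (logarithmic convexity) estimate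
`‖S_T v‖ ≤ (C ‖1_ω S_{T−τ} v‖)^β ‖v‖^{1−β}`: for every `ε > 0` and every
normalized initial datum `Ψ⁰` there is an impulse control `h` supported in `ω`
with `‖h‖ ≤ C ε^{−(1−β)/β}` such that `‖S_T Ψ⁰ + S_{T−τ}(1_ω h)‖ ≤ ε`. -/
theorem impulse_controllability_from_observability
    {H : Type*} [NormedAddCommGroup H] [InnerProductSpace ℝ H] [CompleteSpace H]
    (S : ℝ → H →L[ℝ] H) (Pω : H →L[ℝ] H)
    (T τ C β : ℝ) (hτ : 0 < τ) (hτT : τ < T) (hC : 0 < C)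
    (hSTsa : IsSelfAdjoint (S T)) (hSTτsa : IsSelfAdjoint (S (T - τ)))
    (hPωsa : IsSelfAdjoint Pω) (hPωproj : Pω.comp Pω = Pω)
    (hβ : β ∈ Set.Ioo (0:ℝ) 1)
    (hobs : ∀ v : H, ‖S T v‖ ≤ (C * ‖Pω (S (T - τ) v)‖) ^ β * ‖v‖ ^ (1 - β)) :
    ∀ ε : ℝ, 0 < ε → ∀ Ψ0 : H, ‖Ψ0‖ = 1 →
      ∃ h : H, Pω h = h ∧ ‖h‖ ≤ C * ε ^ (-(1 - β)/β) ∧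
        ‖S T Ψ0 + S (T - τ) (Pω h)‖ ≤ ε := by
  obtain ⟨hβ0, hβ1⟩ := hβ
  have h1β : (0:ℝ) < 1 - β := by linarith
  intro ε hε Ψ0 hΨ0
  set x := S T Ψ0 with hx
  set M := C * ε ^ (-(1 - β)/β) with hM
  have hMpos : 0 < M := mul_pos hC (Real.rpow_pos_of_pos hε _)
  set ε₀ := (1-β) * β ^ (β/(1-β)) * ε with hε₀
  have hbβ1 : β ^ (β/(1-β)) ≤ 1 := Real.rpow_le_one hβ0.le hβ1.le (by positivity)
  have hbβpos : (0:ℝ) < β ^ (β/(1-β)) := Real.rpow_pos_of_pos hβ0 _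
  have hε₀pos : 0 < ε₀ := by positivity
  have hε₀le : ε₀ ≤ (1-β)*ε := by
    rw [hε₀]
    nlinarith [hbβ1, hε.le, h1β.le]
  have hε₀lt : ε₀ < ε := by nlinarith [mul_pos hβ0 hε]
  have hεε₀ : 0 < ε - ε₀ := by linarith
  set α := 4*(ε-ε₀)^2/M^2 with hα
  have hαpos : 0 < α := by
    apply div_pos (by positivity) (by positivity)
  -- symmetry helpers
  have hST : ∀ a b : H, ⟪S T a, b⟫ = ⟪a, S T b⟫ := fun a b => hSTsa.isSymmetric a b
  have hS : ∀ a b : H, ⟪S (T-τ) a, b⟫ = ⟪a, S (T-τ) b⟫ :=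
    fun a b => hSTτsa.isSymmetric a b
  have hP : ∀ a b : H, ⟪Pω a, b⟫ = ⟪a, Pω b⟫ := fun a b => hPωsa.isSymmetric a b
  have hPP : ∀ a : H, Pω (Pω a) = Pω a := by
    intro a
    have := DFunLike.congr_fun hPωproj a
    simpa using this
  set B := Pω.comp (S (T - τ)) with hBdef
  have hBapp : ∀ v : H, B v = Pω (S (T - τ) v) := fun v => rfl
  set G : H → H := fun v => S (T-τ) (Pω (S (T-τ) v)) with hGdef
  have hBG : ∀ a b : H, ⟪B a, B b⟫ = ⟪G a, b⟫ := by
    intro a b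
    calc ⟪B a, B b⟫ = ⟪Pω (S (T-τ) a), Pω (S (T-τ) b)⟫ := rfl
      _ = ⟪S (T-τ) a, Pω (Pω (S (T-τ) b))⟫ := hP _ _
      _ = ⟪S (T-τ) a, Pω (S (T-τ) b)⟫ := by rw [hPP]
      _ = ⟪Pω (S (T-τ) a), S (T-τ) b⟫ := (hP _ _).symm
      _ = ⟪S (T-τ) (Pω (S (T-τ) a)), b⟫ := (hS _ _).symm
      _ = ⟪G a, b⟫ := rfl
  -- duality estimate
  have hdual : ∀ v : H, ⟪x, v⟫ ≤ M * ‖B v‖ + ε₀ * ‖v‖ := by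
    intro v
    have e : ⟪x, v⟫ = ⟪Ψ0, S T v⟫ := hST Ψ0 v
    have h1 : ⟪x, v⟫ ≤ ‖S T v‖ := by
      rw [e]
      calc ⟪Ψ0, S T v⟫ ≤ ‖Ψ0‖ * ‖S T v‖ := real_inner_le_norm _ _
        _ = ‖S T v‖ := by rw [hΨ0, one_mul]
    have h2 := hobs v
    have h3 := young_impulse_aux hβ0 hβ1 hε (a := C * ‖Pω (S (T-τ) v)‖)
      (by positivity) (norm_nonneg v)
    have h4 : ε ^ (-(1-β)/β) * (C * ‖Pω (S (T-τ) v)‖) = M * ‖B v‖ := by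
      rw [hM, hBapp]; ring
    calc ⟪x, v⟫ ≤ ‖S T v‖ := h1
      _ ≤ (C * ‖Pω (S (T - τ) v)‖) ^ β * ‖v‖ ^ (1 - β) := h2
      _ ≤ ε ^ (-(1-β)/β) * (C * ‖Pω (S (T-τ) v)‖) + ((1-β) * β ^ (β/(1-β)) * ε) * ‖v‖ := h3
      _ = M * ‖B v‖ + ε₀ * ‖v‖ := by rw [h4, hε₀]
  -- the HUM-type functional and its minimizer
  set J : H → ℝ := fun v => ‖B v‖^2/2 + α/2*‖v‖^2 + ε₀*‖v‖ + ⟪x, v⟫ with hJdef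
  have hJcont : Continuous J := by
    rw [hJdef]
    exact ((((B.continuous.norm.pow 2).div_const 2).add
      (continuous_const.mul (continuous_norm.pow 2))).add
      (continuous_const.mul continuous_norm)).add
      (continuous_const.inner continuous_id)
  have hJbdd : BddBelow (Set.range J) := by
    refine ⟨-(‖x‖^2/(2*α)), ?_⟩
    rintro r ⟨v, rfl⟩
    have hinner : -(‖x‖*‖v‖) ≤ ⟪x, v⟫ := by
      have := abs_real_inner_le_norm x v
      have h' := abs_le.mp this
      linarith [h'.1]
    have expand : α/2*‖v‖^2 - ‖x‖*‖v‖ + ‖x‖^2/(2*α) = (α*‖v‖ - ‖x‖)^2/(2*α) := by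
      field_simp
      ring
    have hkey : 0 ≤ α/2*‖v‖^2 - ‖x‖*‖v‖ + ‖x‖^2/(2*α) := by
      rw [expand]; positivity
    have hB2 : 0 ≤ ‖B v‖^2/2 := by positivity
    have hε₀v : 0 ≤ ε₀*‖v‖ := by positivity
    simp only [hJdef]
    linarith
  have hJconv : ∀ u v : H, J ((2:ℝ)⁻¹ • (u + v)) ≤ J u / 2 + J v / 2 - α/8 * ‖u - v‖^2 := by
    intro u v
    have hmid : ∀ p q : H, ‖(2:ℝ)⁻¹ • (p+q)‖^2 = ‖p‖^2/2 + ‖q‖^2/2 - ‖p-q‖^2/4 := by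
      intro p q
      have hpar := parallelogram_law_with_norm ℝ p q
      have hpar' : ‖p+q‖^2 + ‖p-q‖^2 = 2*(‖p‖^2+‖q‖^2) := by
        simpa [sq] using hpar
      have hn : ‖(2:ℝ)⁻¹ • (p+q)‖ = ‖p+q‖/2 := by
        rw [norm_smul]
        simp [Real.norm_eq_abs]
        ring
      rw [hn, div_pow]
      linarith
    have hBmid : B ((2:ℝ)⁻¹ • (u+v)) = (2:ℝ)⁻¹ • (B u + B v) := by
      rw [map_smul, map_add]
    have hnormmid : ‖(2:ℝ)⁻¹ • (u+v)‖ ≤ ‖u‖/2 + ‖v‖/2 := by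
      rw [norm_smul]
      have h1 : ‖(2:ℝ)⁻¹‖ = 2⁻¹ := by
        rw [Real.norm_eq_abs, abs_of_pos]; norm_num
      rw [h1]
      calc (2:ℝ)⁻¹ * ‖u+v‖ ≤ 2⁻¹ * (‖u‖ + ‖v‖) :=
            mul_le_mul_of_nonneg_left (norm_add_le u v) (by norm_num)
        _ = ‖u‖/2 + ‖v‖/2 := by ring
    have hε₀mid := mul_le_mul_of_nonneg_left hnormmid hε₀pos.le
    have hBsq : (0:ℝ) ≤ ‖B u - B v‖^2 := sq_nonneg _
    have hinner : ⟪x, (2:ℝ)⁻¹ • (u+v)⟫ = 2⁻¹*⟪x, u⟫ + 2⁻¹*⟪x, v⟫ := by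
      rw [real_inner_smul_right, inner_add_right]; ring
    simp only [hJdef]
    rw [hBmid, hmid (B u) (B v), hmid u v, hinner]
    nlinarith [hε₀mid, hBsq, hαpos]
  obtain ⟨m, hm⟩ := exists_min_of_midpoint_convex J hJcont α hαpos hJconv hJbdd
  have hm' : ∀ v : H, ‖B m‖^2/2 + α/2*‖m‖^2 + ε₀*‖m‖ + ⟪x, m⟫ ≤
      ‖B v‖^2/2 + α/2*‖v‖^2 + ε₀*‖v‖ + ⟪x, v⟫ := hm
  -- first-order optimality condition (variational inequality)
  have hO1 : ∀ w : H, 0 ≤ ⟪x, w⟫ + ⟪G m, w⟫ + α*⟪m, w⟫ + ε₀*‖w‖ := by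
    intro w
    set K := ‖B w‖^2/2 + α/2*‖w‖^2 with hK
    have hKnn : 0 ≤ K := by rw [hK]; positivity
    set A := ⟪x, w⟫ + ⟪G m, w⟫ + α*⟪m, w⟫ + ε₀*‖w‖ with hA
    have step : ∀ s : ℝ, 0 < s → 0 ≤ A + s*K := by
      intro s hs
      have hmin := hm' (m + s • w)
      have hBexp : B (m + s • w) = B m + s • B w := by rw [map_add, map_smul]
      have hsn : ‖(s : ℝ)‖ = s := by rw [Real.norm_eq_abs, abs_of_pos hs]
      have e1 : ‖B m + s • B w‖^2 = ‖B m‖^2 + 2*(s*⟪B m, B w⟫) + s^2*‖B w‖^2 := by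
        rw [norm_add_sq_real, real_inner_smul_right, norm_smul, hsn, mul_pow]
      have e2 : ‖m + s • w‖^2 = ‖m‖^2 + 2*(s*⟪m, w⟫) + s^2*‖w‖^2 := by
        rw [norm_add_sq_real, real_inner_smul_right, norm_smul, hsn, mul_pow]
      have e3 : ‖m + s • w‖ ≤ ‖m‖ + s*‖w‖ := by
        calc ‖m + s • w‖ ≤ ‖m‖ + ‖s • w‖ := norm_add_le _ _
          _ = ‖m‖ + s*‖w‖ := by rw [norm_smul, hsn]
      have e4 : ⟪x, m + s • w⟫ = ⟪x, m⟫ + s*⟪x, w⟫ := by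
        rw [inner_add_right, real_inner_smul_right]
      have e5 : ⟪B m, B w⟫ = ⟪G m, w⟫ := hBG m w
      rw [hBexp, e1, e2, e4, e5] at hmin
      have e6 : ε₀*‖m + s • w‖ ≤ ε₀*‖m‖ + ε₀*(s*‖w‖) := by
        calc ε₀*‖m + s • w‖ ≤ ε₀*(‖m‖ + s*‖w‖) :=
              mul_le_mul_of_nonneg_left e3 hε₀pos.le
          _ = ε₀*‖m‖ + ε₀*(s*‖w‖) := by ring
      have hsA : 0 ≤ s*(A + s*K) := by rw [hA, hK]; nlinarith [hmin, e6]
      have := (mul_le_mul_iff_right₀ hs).mp (by linarith : s*0 ≤ s*(A + s*K))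
      linarith
    by_contra hneg
    push_neg at hneg
    set c := -A with hc
    have hcpos : 0 < c := by rw [hc]; linarith
    have hKpos : 0 < K + 1 := by linarith
    have hs1 : 0 < c/(K+1) := div_pos hcpos hKpos
    have h1 : c ≤ (c/(K+1))*K := by
      have := step (c/(K+1)) hs1
      rw [hc] at *
      linarith
    have h3 : (c/(K+1))*K < c := by
      rw [div_mul_eq_mul_div, div_lt_iff₀ hKpos]
      nlinarith
    linarith
  -- scaling optimality: the Euler equation along the ray through m
  have hO2 : ‖B m‖^2 + α*‖m‖^2 + ⟪x, m⟫ + ε₀*‖m‖ ≤ 0 := by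
    set q := ‖B m‖^2 + α*‖m‖^2 with hq
    have hqnn : 0 ≤ q := by rw [hq]; positivity
    set L := q + ⟪x, m⟫ + ε₀*‖m‖ with hL
    have step2 : ∀ s : ℝ, 0 < s → s ≤ 1 → L ≤ s/2*q := by
      intro s hs hs1
      have hmin := hm' ((1-s) • m)
      have hBexp : B ((1-s) • m) = (1-s) • B m := by rw [map_smul]
      have hsn : ‖(1-s : ℝ)‖ = 1-s := by
        rw [Real.norm_eq_abs, abs_of_nonneg (by linarith)]
      have e1 : ‖(1-s) • B m‖^2 = (1-s)^2*‖B m‖^2 := by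
        rw [norm_smul, hsn, mul_pow]
      have e2 : ‖(1-s) • m‖^2 = (1-s)^2*‖m‖^2 := by
        rw [norm_smul, hsn, mul_pow]
      have e2' : ‖(1-s) • m‖ = (1-s)*‖m‖ := by rw [norm_smul, hsn]
      have e4 : ⟪x, (1-s) • m⟫ = (1-s)*⟪x, m⟫ := real_inner_smul_right _ _ _
      rw [hBexp, e1, e2, e2', e4] at hmin
      have hsL : s*L ≤ s*(s/2*q) := by rw [hL, hq]; nlinarith [hmin]
      exact (mul_le_mul_iff_right₀ hs).mp hsL
    by_contra hneg
    push_neg at hneg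
    have hLpos : 0 < L := by rw [hL]; linarith
    have hqpos : 0 < q + 1 := by linarith
    have hsval : 0 < L/(q+1) := div_pos hLpos hqpos
    have hsle : L/(q+1) ≤ 1 := by
      rw [div_le_one hqpos]
      have := step2 1 one_pos le_rfl
      linarith
    have h1 := step2 (L/(q+1)) hsval hsle
    have h3 : (L/(q+1))/2*q < L := by
      rw [div_div, div_mul_eq_mul_div, div_lt_iff₀ (by linarith : (0:ℝ) < (q+1)*2)]
      nlinarith
    linarith
  -- norm bounds for the control
  have hdualm : -⟪x, m⟫ ≤ M*‖B m‖ + ε₀*‖m‖ := by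
    have := hdual (-m)
    rw [inner_neg_right, map_neg, norm_neg, norm_neg] at this
    linarith
  have hqM : ‖B m‖^2 + α*‖m‖^2 ≤ M*‖B m‖ := by linarith
  have hcontrol : ‖B m‖ ≤ M := by
    nlinarith [sq_nonneg (‖B m‖ - M), mul_nonneg hαpos.le (sq_nonneg ‖m‖),
      norm_nonneg (B m), hMpos]
  have hαm : α*‖m‖ ≤ ε - ε₀ := by
    have h1 : α*‖m‖^2 ≤ M^2/4 := by
      nlinarith [hqM, sq_nonneg (‖B m‖ - M/2)]
    have hαM : α*(M^2/4) = (ε-ε₀)^2 := by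
      rw [hα]; field_simp
    have h2 : (α*‖m‖)^2 ≤ (ε-ε₀)^2 := by
      calc (α*‖m‖)^2 = α*(α*‖m‖^2) := by ring
        _ ≤ α*(M^2/4) := mul_le_mul_of_nonneg_left h1 hαpos.le
        _ = (ε-ε₀)^2 := hαM
    nlinarith [mul_nonneg hαpos.le (norm_nonneg m), hεε₀]
  -- the residual is small
  set y := x + G m + α • m with hy
  have hyle : ‖y‖ ≤ ε₀ := by
    have h0 := hO1 (-y)
    rw [inner_neg_right, inner_neg_right, inner_neg_right, norm_neg] at h0
    have hyy : ⟪x, y⟫ + ⟪G m, y⟫ + α*⟪m, y⟫ = ‖y‖^2 := by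
      have : ⟪y, y⟫ = ⟪x, y⟫ + ⟪G m, y⟫ + α*⟪m, y⟫ := by
        rw [hy, inner_add_left, inner_add_left, real_inner_smul_left]
      rw [← this, real_inner_self_eq_norm_sq]
    have h1 : ‖y‖^2 ≤ ε₀*‖y‖ := by nlinarith [h0, hyy]
    nlinarith [norm_nonneg y, hε₀pos]
  -- conclusion
  refine ⟨B m, hPP _, hcontrol, ?_⟩
  have hPB : Pω (B m) = B m := hPP _
  rw [hPB]
  have hSB : S (T - τ) (B m) = G m := rfl
  rw [hSB]
  have hxy : x + G m = y - α • m := by rw [hy]; abel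
  rw [hxy]
  have hnα : ‖α • m‖ = α*‖m‖ := by
    rw [norm_smul, Real.norm_eq_abs, abs_of_pos hαpos]
  calc ‖y - α • m‖ ≤ ‖y‖ + ‖α • m‖ := norm_sub_le _ _
    _ = ‖y‖ + α*‖m‖ := by rw [hnα]
    _ ≤ ε₀ + (ε - ε₀) := add_le_add hyle hαm
    _ = ε := by ring
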